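/- For a positive integer N, the map sending a column vector (a, c) ∈ ℤ^2 with gcd(N, a, c) = 1 to the coset of any γ ∈ SL_2(ℤ) with first column congruent to (a, c) mod N induces a well-defined bijection from {(a,c) ∈ ℤ^2 : gcd(N,a,c)=1} modulo the equivalence (a,c) ~ (a',c') iff (a,c) ≡ ±(a',c') mod N, onto the set of left cosets SL_2(ℤ)/±Γ_1(N). -/

import Mathlib

open Matrix CongruenceSubgroup

/-- The subgroup `±Γ₁(N)` of `SL₂(ℤ)` generated by `Γ₁(N)` and `-I`. -/
def pmGamma1 (N : ℕ) : Subgroup (Matrix.SpecialLinearGroup (Fin 2) ℤ) :=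
  Gamma1 N ⊔ Subgroup.zpowers (-1)

/-- Column vectors `(a, c) ∈ ℤ²` with `gcd(N, a, c) = 1`. -/
def PrimCol (N : ℕ) : Type :=
  {v : Fin 2 → ℤ // Int.gcd (N : ℤ) (Int.gcd (v 0) (v 1)) = 1}

/-- The relation `(a,c) ~ (a',c')` iff `(a,c) ≡ ±(a',c') (mod N)`. -/
def colSetoid (N : ℕ) : Setoid (PrimCol N) :=
  ⟨fun v w => (∀ i, ((v.1 i : ZMod N)) = (w.1 i : ZMod N)) ∨
      (∀ i, ((v.1 i : ZMod N)) = -(w.1 i : ZMod N)),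
    by
      constructor
      · intro v; left; intro i; rfl
      · rintro v w (h | h)
        · left; intro i; rw [h i]
        · right; intro i; rw [h i, neg_neg]
      · rintro u v w (h | h) (h' | h')
        · left; intro i; rw [h i, h' i]
        · right; intro i; rw [h i, h' i]
        · right; intro i; rw [h i, h' i]
        · left; intro i; rw [h i, h' i, neg_neg]⟩

/-- The map sending `(a,c)` with `gcd(N,a,c)=1` to the coset of any `γ ∈ SL₂(ℤ)` whose
first column is congruent to `(a,c)` mod `N` is a well-defined bijection from
`{(a,c) : gcd(N,a,c)=1}/±` onto `SL₂(ℤ)/±Γ₁(N)`. -/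
lemma dvd_gcd3_iff {N a c : ℤ} {p : ℕ} :
    p ∣ Int.gcd N (Int.gcd a c) ↔ ((p:ℤ) ∣ N ∧ (p:ℤ) ∣ a ∧ (p:ℤ) ∣ c) := by
  constructor
  · intro h
    have h' : (p:ℤ) ∣ (Int.gcd N (Int.gcd a c) : ℤ) := Int.natCast_dvd_natCast.mpr h
    refine ⟨h'.trans (Int.gcd_dvd_left _ _), ?_, ?_⟩
    · exact (h'.trans (Int.gcd_dvd_right _ _)).trans (Int.gcd_dvd_left _ _)
    · exact (h'.trans (Int.gcd_dvd_right _ _)).trans (Int.gcd_dvd_right _ _)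
  · rintro ⟨h1, h2, h3⟩
    exact Int.natCast_dvd_natCast.mp (Int.dvd_coe_gcd h1 (Int.dvd_coe_gcd h2 h3))

lemma gcd3_eq_one_iff {N a c : ℤ} : Int.gcd N (Int.gcd a c) = 1 ↔
    ∀ p : ℕ, p.Prime → ¬((p:ℤ) ∣ N ∧ (p:ℤ) ∣ a ∧ (p:ℤ) ∣ c) := by
  rw [Nat.eq_one_iff_not_exists_prime_dvd]
  exact forall_congr' fun p => imp_congr_right fun _ => not_congr dvd_gcd3_iff

lemma exists_coprime_lift {N a c : ℤ} (hN : 0 < N) (h : Int.gcd N (Int.gcd a c) = 1) :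
    ∃ a' c' : ℤ, Int.gcd a' c' = 1 ∧ N ∣ a' - a ∧ N ∣ c' - c := by
  set a₁ : ℤ := a + N * (1 + |a|) with ha₁
  have ha₁pos : 0 < a₁ := by
    have h1 : 1 + |a| ≤ N * (1 + |a|) := by
      nlinarith [abs_nonneg a]
    nlinarith [neg_abs_le a]
  set s : Finset ℕ := a₁.natAbs.primeFactors.filter (fun p => ¬((p:ℤ) ∣ c)) with hs
  set t : ℕ := ∏ p ∈ s, p with ht
  set c₁ : ℤ := c + N * t with hc₁
  have hmem : ∀ p : ℕ, p.Prime → (p ∣ t ↔ p ∈ s) := by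
    intro p hp
    constructor
    · intro hd
      obtain ⟨q, hq, hpq⟩ := (Prime.dvd_finset_prod_iff hp.prime _).mp hd
      have hq' : q.Prime := Nat.prime_of_mem_primeFactors (Finset.mem_filter.mp hq).1
      rwa [(Nat.prime_dvd_prime_iff_eq hp hq').mp hpq]
    · intro hd; exact Finset.dvd_prod_of_mem _ hd
  have key : Int.gcd a₁ c₁ = 1 := by
    rw [Nat.eq_one_iff_not_exists_prime_dvd]
    intro p hp hdvd
    have hpd : (p:ℤ) ∣ (Int.gcd a₁ c₁ : ℤ) := Int.natCast_dvd_natCast.mpr hdvd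
    have hpa : (p:ℤ) ∣ a₁ := hpd.trans (Int.gcd_dvd_left _ _)
    have hpc₁ : (p:ℤ) ∣ c₁ := hpd.trans (Int.gcd_dvd_right _ _)
    by_cases hpc : (p:ℤ) ∣ c
    · -- then p ∤ N (else p divides gcd(N,a,c)), so p ∣ t, so p ∈ s, contradiction
      have hpNt : (p:ℤ) ∣ N * t := by
        have : (N:ℤ) * t = c₁ - c := by ring
        rw [this]; exact dvd_sub hpc₁ hpc
      have hpN : ¬ (p:ℤ) ∣ N := by
        intro hpN
        have hpa' : (p:ℤ) ∣ a := by
          have : a = a₁ - N * (1 + |a|) := by ring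
          rw [this]; exact dvd_sub hpa (hpN.mul_right _)
        exact hp.one_lt.ne' (Nat.eq_one_iff_not_exists_prime_dvd.mp h p hp
          (dvd_gcd3_iff.mpr ⟨hpN, hpa', hpc⟩) |>.elim)
      have hpt : (p:ℤ) ∣ (t:ℤ) :=
        ((Int.Prime.dvd_mul' hp hpNt).resolve_left hpN)
      have : p ∈ s := (hmem p hp).mp (Int.natCast_dvd_natCast.mp hpt)
      exact (Finset.mem_filter.mp this).2 hpc
    · -- p ∤ c : then p ∈ s, so p ∣ t, so p ∣ c₁ - N*t = c, contradiction
      have hps : p ∈ s := by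
        refine Finset.mem_filter.mpr ⟨Nat.mem_primeFactors.mpr ⟨hp, ?_, ?_⟩, hpc⟩
        · exact Int.natCast_dvd_natCast.mp (by rwa [Int.natCast_natAbs, dvd_abs])
        · simpa using ha₁pos.ne'
      have hpt : (p:ℤ) ∣ (t:ℤ) := Int.natCast_dvd_natCast.mpr ((hmem p hp).mpr hps)
      have : (p:ℤ) ∣ c := by
        have hc : c = c₁ - N * t := by ring
        rw [hc]; exact dvd_sub hpc₁ (hpt.mul_left _)
      exact hpc this
  exact ⟨a₁, c₁, key, ⟨1 + |a|, by ring⟩, ⟨t, by ring⟩⟩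

lemma zmod_eq_of_dvd {N : ℕ} {x y : ℤ} (h : (N:ℤ) ∣ x - y) : ((x : ZMod N)) = (y : ZMod N) := by
  rw [ZMod.intCast_eq_intCast_iff]
  exact (Int.modEq_iff_dvd.mpr (by simpa using h)).symm

lemma exists_SL_col (N : ℕ) (hN : 0 < N) (a c : ℤ) (h : Int.gcd N (Int.gcd a c) = 1) :
    ∃ γ : Matrix.SpecialLinearGroup (Fin 2) ℤ,
      ((γ 0 0 : ℤ) : ZMod N) = (a : ZMod N) ∧ ((γ 1 0 : ℤ) : ZMod N) = (c : ZMod N) := by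
  obtain ⟨a', c', hg, hka, hkc⟩ := exists_coprime_lift (by exact_mod_cast hN) h
  obtain ⟨u, v, huv⟩ := Int.isCoprime_iff_gcd_eq_one.mpr hg
  refine ⟨⟨!![a', -v; c', u], by simp [Matrix.det_fin_two]; linarith⟩, ?_, ?_⟩
  · simpa using zmod_eq_of_dvd hka
  · simpa using zmod_eq_of_dvd hkc

lemma inv_mul_mem_Gamma1 (N : ℕ) (γ γ' : Matrix.SpecialLinearGroup (Fin 2) ℤ)
    (h0 : ((γ 0 0 : ℤ) : ZMod N) = ((γ' 0 0 : ℤ) : ZMod N))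
    (h1 : ((γ 1 0 : ℤ) : ZMod N) = ((γ' 1 0 : ℤ) : ZMod N)) :
    γ⁻¹ * γ' ∈ Gamma1 N := by
  have hd : γ 0 0 * γ 1 1 - γ 0 1 * γ 1 0 = 1 := by
    have := γ.2; rwa [Matrix.det_fin_two] at this
  have hd' : γ' 0 0 * γ' 1 1 - γ' 0 1 * γ' 1 0 = 1 := by
    have := γ'.2; rwa [Matrix.det_fin_two] at this
  rw [Gamma1_mem]
  have e00 : ((γ⁻¹ * γ') 0 0 : ℤ) = γ 1 1 * γ' 0 0 - γ 0 1 * γ' 1 0 := by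
    simp [Matrix.SpecialLinearGroup.coe_inv, Matrix.adjugate_fin_two, Matrix.mul_apply, Fin.sum_univ_two]
    try ring
  have e10 : ((γ⁻¹ * γ') 1 0 : ℤ) = -(γ 1 0) * γ' 0 0 + γ 0 0 * γ' 1 0 := by
    simp [Matrix.SpecialLinearGroup.coe_inv, Matrix.adjugate_fin_two, Matrix.mul_apply, Fin.sum_univ_two]
    try ring
  have e11 : ((γ⁻¹ * γ') 1 1 : ℤ) = -(γ 1 0) * γ' 0 1 + γ 0 0 * γ' 1 1 := by
    simp [Matrix.SpecialLinearGroup.coe_inv, Matrix.adjugate_fin_two, Matrix.mul_apply, Fin.sum_univ_two]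
    try ring
  refine ⟨?_, ?_, ?_⟩
  · rw [e00]; push_cast
    rw [← h0, ← h1]
    have : ((γ 0 0 * γ 1 1 - γ 0 1 * γ 1 0 : ℤ) : ZMod N) = ((1:ℤ) : ZMod N) := by rw [hd]
    push_cast at this
    rw [← this]; ring
  · rw [e11]; push_cast
    rw [h0, h1]
    have : ((γ' 0 0 * γ' 1 1 - γ' 0 1 * γ' 1 0 : ℤ) : ZMod N) = ((1:ℤ) : ZMod N) := by rw [hd']
    push_cast at this
    rw [← this]; ring
  · rw [e10]; push_cast
    rw [← h0, ← h1]; ring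

lemma neg_one_central (x : Matrix.SpecialLinearGroup (Fin 2) ℤ) :
    (-1) * x = x * (-1) := by
  ext i j
  simp

lemma inv_mul_mem_pmGamma1 (N : ℕ) (γ γ' : Matrix.SpecialLinearGroup (Fin 2) ℤ)
    (h : (((γ 0 0 : ℤ) : ZMod N) = ((γ' 0 0 : ℤ) : ZMod N) ∧
          ((γ 1 0 : ℤ) : ZMod N) = ((γ' 1 0 : ℤ) : ZMod N)) ∨
         (((γ 0 0 : ℤ) : ZMod N) = -((γ' 0 0 : ℤ) : ZMod N) ∧
          ((γ 1 0 : ℤ) : ZMod N) = -((γ' 1 0 : ℤ) : ZMod N))) :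
    γ⁻¹ * γ' ∈ pmGamma1 N := by
  rcases h with ⟨h0, h1⟩ | ⟨h0, h1⟩
  · exact Subgroup.mem_sup_left (inv_mul_mem_Gamma1 N γ γ' h0 h1)
  · have hneg : ∀ i j, (((-1 : Matrix.SpecialLinearGroup (Fin 2) ℤ) * γ') i j : ℤ) = -(γ' i j) := by
      intro i j; simp
    have hmem : γ⁻¹ * ((-1) * γ') ∈ Gamma1 N := by
      apply inv_mul_mem_Gamma1
      · rw [hneg]; push_cast; rw [h0]
      · rw [hneg]; push_cast; rw [h1]
    have key : γ⁻¹ * γ' = (γ⁻¹ * ((-1) * γ')) * (-1) := by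
      rw [mul_assoc, ← neg_one_central, ← mul_assoc (-1) (-1) γ']
      simp
    rw [key]
    exact Subgroup.mul_mem _ (Subgroup.mem_sup_left hmem)
      (Subgroup.mem_sup_right (Subgroup.mem_zpowers _))

lemma col_gcd (N : ℕ) (γ : Matrix.SpecialLinearGroup (Fin 2) ℤ) :
    Int.gcd (N : ℤ) (Int.gcd (γ 0 0) (γ 1 0)) = 1 := by
  have hd : γ 0 0 * γ 1 1 - γ 0 1 * γ 1 0 = 1 := by
    have := γ.2; rwa [Matrix.det_fin_two] at this
  have : Int.gcd (γ 0 0) (γ 1 0) = 1 :=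
    Int.isCoprime_iff_gcd_eq_one.mp ⟨γ 1 1, -(γ 0 1), by linarith⟩
  rw [this]
  simp [Int.gcd]

theorem primCol_equiv_cosets (N : ℕ) (hN : 0 < N) :
    ∃ e : Quotient (colSetoid N) ≃
        (Matrix.SpecialLinearGroup (Fin 2) ℤ ⧸ pmGamma1 N),
      ∀ (v : PrimCol N) (γ : Matrix.SpecialLinearGroup (Fin 2) ℤ),
        ((γ 0 0 : ℤ) : ZMod N) = (v.1 0 : ZMod N) →
        ((γ 1 0 : ℤ) : ZMod N) = (v.1 1 : ZMod N) →
        e (Quotient.mk (colSetoid N) v) = QuotientGroup.mk γ := by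
  classical
  -- the column map
  let col : Matrix.SpecialLinearGroup (Fin 2) ℤ → PrimCol N := fun γ =>
    ⟨![γ 0 0, γ 1 0], by simpa using col_gcd N γ⟩
  have hcol0 : ∀ γ, (col γ).1 0 = γ 0 0 := fun γ => rfl
  have hcol1 : ∀ γ, (col γ).1 1 = γ 1 0 := fun γ => rfl
  let f : Matrix.SpecialLinearGroup (Fin 2) ℤ → Quotient (colSetoid N) := fun γ =>
    Quotient.mk (colSetoid N) (col γ)
  -- f is invariant under right multiplication by pmGamma1
  let S : Subgroup (Matrix.SpecialLinearGroup (Fin 2) ℤ) :=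
    { carrier := {δ | ∀ x, f (x * δ) = f x}
      one_mem' := by intro x; rw [mul_one]
      mul_mem' := by
        intro δ₁ δ₂ h1 h2 x
        rw [← mul_assoc, h2 (x * δ₁), h1 x]
      inv_mem' := by
        intro δ h x
        have := h (x * δ⁻¹)
        rw [mul_assoc, inv_mul_cancel, mul_one] at this
        exact this.symm }
  have hS : pmGamma1 N ≤ S := by
    apply sup_le
    · intro δ hδ x
      rw [Gamma1_mem] at hδ
      obtain ⟨ha, hb, hc⟩ := hδ
      apply Quotient.sound
      left
      intro i
      fin_cases i
      · show (((x * δ) 0 0 : ℤ) : ZMod N) = ((x 0 0 : ℤ) : ZMod N)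
        have : ((x * δ) 0 0 : ℤ) = x 0 0 * δ 0 0 + x 0 1 * δ 1 0 := by
          simp [Matrix.mul_apply, Fin.sum_univ_two]
        rw [this]; push_cast; rw [ha, hc]; ring
      · show (((x * δ) 1 0 : ℤ) : ZMod N) = ((x 1 0 : ℤ) : ZMod N)
        have : ((x * δ) 1 0 : ℤ) = x 1 0 * δ 0 0 + x 1 1 * δ 1 0 := by
          simp [Matrix.mul_apply, Fin.sum_univ_two]
        rw [this]; push_cast; rw [ha, hc]; ring
    · rw [Subgroup.zpowers_le]
      intro x
      apply Quotient.sound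
      right
      intro i
      fin_cases i
      · show (((x * (-1)) 0 0 : ℤ) : ZMod N) = -((x 0 0 : ℤ) : ZMod N)
        have : ((x * (-1)) 0 0 : ℤ) = -(x 0 0) := by simp
        rw [this]; push_cast; ring
      · show (((x * (-1)) 1 0 : ℤ) : ZMod N) = -((x 1 0 : ℤ) : ZMod N)
        have : ((x * (-1)) 1 0 : ℤ) = -(x 1 0) := by simp
        rw [this]; push_cast; ring
  -- the inverse map
  let g : (Matrix.SpecialLinearGroup (Fin 2) ℤ ⧸ pmGamma1 N) → Quotient (colSetoid N) :=
    Quotient.lift f (by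
      intro x y hxy
      have hxy' : x⁻¹ * y ∈ pmGamma1 N := (QuotientGroup.leftRel_apply).mp hxy
      have : y = x * (x⁻¹ * y) := by group
      rw [this]
      exact (hS hxy' x).symm)
  -- the forward map
  have liftex : ∀ v : PrimCol N, ∃ γ : Matrix.SpecialLinearGroup (Fin 2) ℤ,
      ((γ 0 0 : ℤ) : ZMod N) = ((v.1 0 : ℤ) : ZMod N) ∧
      ((γ 1 0 : ℤ) : ZMod N) = ((v.1 1 : ℤ) : ZMod N) :=
    fun v => exists_SL_col N hN (v.1 0) (v.1 1) v.2
  let lft : PrimCol N → Matrix.SpecialLinearGroup (Fin 2) ℤ := fun v => (liftex v).choose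
  have hlft0 : ∀ v, (((lft v) 0 0 : ℤ) : ZMod N) = ((v.1 0 : ℤ) : ZMod N) :=
    fun v => (liftex v).choose_spec.1
  have hlft1 : ∀ v, (((lft v) 1 0 : ℤ) : ZMod N) = ((v.1 1 : ℤ) : ZMod N) :=
    fun v => (liftex v).choose_spec.2
  -- key: if γ has first column ≡ v, then mk (lft v) = mk γ
  have hkey : ∀ (v : PrimCol N) (γ : Matrix.SpecialLinearGroup (Fin 2) ℤ),
      ((γ 0 0 : ℤ) : ZMod N) = ((v.1 0 : ℤ) : ZMod N) →
      ((γ 1 0 : ℤ) : ZMod N) = ((v.1 1 : ℤ) : ZMod N) →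
      (QuotientGroup.mk (s := pmGamma1 N) (lft v)) = QuotientGroup.mk γ := by
    intro v γ h0 h1
    apply (QuotientGroup.eq (s := pmGamma1 N)).mpr
    apply inv_mul_mem_pmGamma1
    left
    exact ⟨(hlft0 v).trans h0.symm, (hlft1 v).trans h1.symm⟩
  let h : Quotient (colSetoid N) → (Matrix.SpecialLinearGroup (Fin 2) ℤ ⧸ pmGamma1 N) :=
    Quotient.lift (fun v => QuotientGroup.mk (s := pmGamma1 N) (lft v)) (by
      intro v w hvw
      apply (QuotientGroup.eq (s := pmGamma1 N)).mpr
      apply inv_mul_mem_pmGamma1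
      rcases hvw with hvw | hvw
      · left
        refine ⟨?_, ?_⟩
        · rw [hlft0 v, hlft0 w, hvw 0]
        · rw [hlft1 v, hlft1 w, hvw 1]
      · right
        refine ⟨?_, ?_⟩
        · rw [hlft0 v, hlft0 w, hvw 0]
        · rw [hlft1 v, hlft1 w, hvw 1])
  have hgf : ∀ v : PrimCol N, g (h (Quotient.mk (colSetoid N) v)) = Quotient.mk (colSetoid N) v := by
    intro v
    show f (lft v) = Quotient.mk (colSetoid N) v
    apply Quotient.sound
    left
    intro i
    fin_cases i
    · show (((lft v) 0 0 : ℤ) : ZMod N) = ((v.1 0 : ℤ) : ZMod N)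
      exact hlft0 v
    · show (((lft v) 1 0 : ℤ) : ZMod N) = ((v.1 1 : ℤ) : ZMod N)
      exact hlft1 v
  have hfg : ∀ γ : Matrix.SpecialLinearGroup (Fin 2) ℤ,
      h (g (QuotientGroup.mk γ)) = QuotientGroup.mk γ := by
    intro γ
    show h (f γ) = QuotientGroup.mk γ
    exact hkey (col γ) γ rfl rfl
  refine ⟨⟨h, g, fun q => ?_, fun q => ?_⟩, ?_⟩
  · exact Quotient.inductionOn q hgf
  · exact Quotient.inductionOn q hfg
  · intro v γ h0 h1
    exact hkey v γ h0 h1
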